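/- If q1 ≥ p23/(p13+p23), then for every real x with 0 ≤ x < (1−q1)·p23 and every p ∈ [0,1], y1(p, x) ≤ y1(0, x) = q1·p13·(1 − x/((1−q1)·p23)); that is, the maximum over p ∈ [0,1] of y1(p, x) is attained at p = 0. -/

import Mathlib

/-- If `q1 ≥ p23/(p13+p23)`, then for every real `x` with `0 ≤ x < (1−q1)·p23`
and every `p ∈ [0,1]`, `y1(p, x) ≤ y1(0, x)`, and `y1(0, x) = q1·p13·(1 − x/((1−q1)·p23))`;
i.e. the maximum over `p ∈ [0,1]` of `y1(p, x)` is attained at `p = 0`. -/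
theorem stmt_2 (q1 q2 p12 p13 p23 : ℝ)
    (hq1 : 0 < q1) (hq1' : q1 < 1) (hq2 : 0 < q2) (hq2' : q2 < 1)
    (hp12 : 0 < p12) (hp12' : p12 ≤ 1) (hp13 : 0 < p13) (hp13' : p13 < 1)
    (hp23 : 0 < p23) (hp23' : p23 ≤ 1) (hp : p13 < p23)
    (y1 : ℝ → ℝ → ℝ)
    (hy1 : ∀ p x, y1 p x =
      q1 * (p13 + (1 - p13) * p12 * p) * ((1 - q1) * p23 - x) /
        (q1 * p12 * (1 - p13) * p + (1 - q1) * p23))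
    (hq : q1 ≥ p23 / (p13 + p23)) :
    ∀ x : ℝ, 0 ≤ x → x < (1 - q1) * p23 →
      (∀ p ∈ Set.Icc (0:ℝ) 1, y1 p x ≤ y1 0 x) ∧
      y1 0 x = q1 * p13 * (1 - x / ((1 - q1) * p23)) := by
  intro x hx hx'
  have hB : 0 < (1 - q1) * p23 := by nlinarith
  have hkey : (1 - q1) * p23 ≤ q1 * p13 := by
    rw [ge_iff_le, div_le_iff₀ (by linarith)] at hq
    nlinarith
  constructor
  · intro p hpmem
    obtain ⟨hp0, hp1⟩ := hpmem
    rw [hy1, hy1]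
    have hD : 0 < q1 * p12 * (1 - p13) * p + (1 - q1) * p23 := by
      have : 0 ≤ q1 * p12 * (1 - p13) * p := by
        exact mul_nonneg (mul_nonneg (mul_nonneg hq1.le hp12.le) (by linarith)) hp0
      linarith
    have hD0 : 0 < q1 * p12 * (1 - p13) * 0 + (1 - q1) * p23 := by
      simpa using hB
    rw [div_le_div_iff₀ hD hD0]
    have hC : 0 ≤ (1 - q1) * p23 - x := by linarith
    nlinarith [mul_nonneg (mul_nonneg (mul_nonneg hq1.le hp12.le) (by linarith : (0:ℝ) ≤ 1 - p13)) hp0,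
      mul_nonneg (mul_nonneg (mul_nonneg (mul_nonneg hq1.le hp12.le) (by linarith : (0:ℝ) ≤ 1 - p13)) hp0) hC,
      mul_nonneg (mul_nonneg (mul_nonneg (mul_nonneg (mul_nonneg hq1.le hp12.le) (by linarith : (0:ℝ) ≤ 1 - p13)) hp0) hC) (by linarith : (0:ℝ) ≤ q1 * p13 - (1 - q1) * p23)]
  · rw [hy1]
    have hB' : (1 - q1) * p23 ≠ 0 := ne_of_gt hB
    have hq1ne : 1 - q1 ≠ 0 := by linarith
    simp only [mul_zero, add_zero]
    field_simp
    ring
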